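/- For all integers τ ≥ 1 and k ≥ 1, there exists a multiset P of positive integers with |P| = O(k² log τ) and Σ(P) = τ such that for every tuple (t₁, …, t_k) of nonnegative integers with t₁ + ⋯ + t_k = τ, there is a partition of P into sub-multisets P₁, …, P_k with Σ(P_i) = t_i for all i ∈ [k]. -/

import Mathlib

/-- Binary representation of `n` as a multiset of powers of two. -/
private def bin : ℕ → Multiset ℕ
  | 0 => 0
  | (n+1) => (if (n+1) % 2 = 1 then ({1} : Multiset ℕ) else 0) + (bin ((n+1)/2)).map (2 * ·)

private lemma map_two_sum (s : Multiset ℕ) : (s.map (2 * ·)).sum = 2 * s.sum := by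
  induction s using Multiset.induction with
  | empty => simp
  | cons a s ih => simp [ih, Nat.mul_add]

private lemma bin_sum : ∀ n, (bin n).sum = n
  | 0 => by simp [bin]
  | (n+1) => by
    rw [bin, Multiset.sum_add, map_two_sum, bin_sum ((n+1)/2)]
    have := Nat.div_add_mod (n+1) 2
    rcases Nat.mod_two_eq_zero_or_one (n+1) with h | h <;> simp [h] <;> omega
decreasing_by exact Nat.div_lt_self (Nat.succ_pos n) one_lt_two

private lemma bin_mem : ∀ n, ∀ p ∈ bin n, ∃ j, p = 2 ^ j ∧ 2 ^ j ≤ n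
  | 0 => by simp [bin]
  | (n+1) => by
    intro p hp
    rw [bin] at hp
    rcases Multiset.mem_add.mp hp with h | h
    · have : p = 1 := by
        rcases Nat.mod_two_eq_zero_or_one (n+1) with h2 | h2 <;> simp [h2] at h; exact h
      exact ⟨0, by simpa using this, by simpa using Nat.succ_le_succ (Nat.zero_le n)⟩
    · obtain ⟨q, hq, rfl⟩ := Multiset.mem_map.mp h
      obtain ⟨j, rfl, hle⟩ := bin_mem ((n+1)/2) q hq
      exact ⟨j+1, by ring, by
        have : 2 * 2 ^ j ≤ 2 * ((n+1)/2) := by omega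
        have h2 : 2 * ((n+1)/2) ≤ n+1 := Nat.mul_div_le _ 2 |>.trans (le_refl _) |>.trans (by
          exact le_of_eq rfl)
        calc 2 ^ (j+1) = 2 * 2 ^ j := by ring
          _ ≤ 2 * ((n+1)/2) := this
          _ ≤ n+1 := Nat.mul_div_le (n+1) 2 ⟩
decreasing_by exact Nat.div_lt_self (Nat.succ_pos n) one_lt_two

private lemma bin_card : ∀ h n, n < 2 ^ h → Multiset.card (bin n) ≤ h := by
  intro h
  induction h with
  | zero => intro n hn; interval_cases n; simp [bin]
  | succ h ih =>
    intro n hn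
    match n with
    | 0 => simp [bin]
    | (m+1) =>
      rw [bin, Multiset.card_add, Multiset.card_map]
      have h1 : (m+1)/2 < 2 ^ h := by
        have := Nat.pow_succ 2 h
        omega
      have := ih ((m+1)/2) h1
      rcases Nat.mod_two_eq_zero_or_one (m+1) with h2 | h2 <;> simp [h2] <;> omega

private lemma multiset_sum_le {s t : Multiset ℕ} (h : s ≤ t) : s.sum ≤ t.sum := by
  obtain ⟨u, rfl⟩ := Multiset.le_iff_exists_add.mp h
  simp

/-- The greedy partition lemma. -/
private lemma greedy (k : ℕ) (hk : 1 ≤ k) : ∀ n (P : Multiset ℕ), Multiset.card P = n →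
    (∀ p ∈ P, 0 < p ∧ k * (p - 1) ≤ (P.filter (· < p)).sum) →
    ∀ d : Fin k → ℕ, (∑ i, d i) = P.sum →
    ∃ Q : Fin k → Multiset ℕ, (∑ i, Q i) = P ∧ ∀ i, (Q i).sum = d i := by
  intro n
  induction n with
  | zero =>
    intro P hcard _ d hd
    have hP : P = 0 := Multiset.card_eq_zero.mp hcard
    subst hP
    simp only [Multiset.sum_zero] at hd
    refine ⟨fun _ => 0, by simp, fun i => ?_⟩
    have : d i = 0 := by
      have := Finset.sum_eq_zero_iff.mp hd i (Finset.mem_univ i)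
      exact this
    simp [this]
  | succ n ih =>
    intro P hcard hcond d hd
    have hPne : P ≠ 0 := by
      intro h; rw [h] at hcard; simp at hcard
    have hfne : P.toFinset.Nonempty := Multiset.toFinset_nonempty.mpr hPne
    set p := P.toFinset.max' hfne with hp_def
    have hpP : p ∈ P := Multiset.mem_toFinset.mp (P.toFinset.max'_mem hfne)
    have hmax : ∀ q ∈ P, q ≤ p := fun q hq =>
      P.toFinset.le_max' q (Multiset.mem_toFinset.mpr hq)
    obtain ⟨hppos, hpfil⟩ := hcond p hpP
    have hPdecomp : p ::ₘ P.erase p = P := Multiset.cons_erase hpP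
    -- filter over P equals filter over erase
    have hfil_eq : P.filter (· < p) = (P.erase p).filter (· < p) := by
      conv_lhs => rw [← hPdecomp]
      exact Multiset.filter_cons_of_neg _ (lt_irrefl p)
    have hsum_decomp : P.sum = p + (P.erase p).sum := by
      conv_lhs => rw [← hPdecomp]; rw [Multiset.sum_cons]
    have hfil_le : (P.filter (· < p)).sum ≤ (P.erase p).sum := by
      rw [hfil_eq]; exact multiset_sum_le (Multiset.filter_le _ _)
    -- find a part with demand ≥ p
    have hex : ∃ i, p ≤ d i := by
      by_contra hno
      push_neg at hno
      have h1 : (∑ i, d i) ≤ ∑ _i : Fin k, (p - 1) :=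
        Finset.sum_le_sum (fun i _ => by have := hno i; omega)
      rw [Finset.sum_const, Finset.card_univ, Fintype.card_fin, smul_eq_mul] at h1
      have h2 : k * (p-1) ≤ (P.erase p).sum := hpfil.trans hfil_le
      omega
    obtain ⟨i, hi⟩ := hex
    -- recurse
    have hcard' : Multiset.card (P.erase p) = n := by
      rw [Multiset.card_erase_of_mem hpP, hcard]; rfl
    have hcond' : ∀ q ∈ P.erase p, 0 < q ∧ k * (q - 1) ≤ ((P.erase p).filter (· < q)).sum := by
      intro q hq
      have hqP : q ∈ P := Multiset.mem_of_mem_erase hq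
      obtain ⟨h1, h2⟩ := hcond q hqP
      refine ⟨h1, ?_⟩
      have : P.filter (· < q) = (P.erase p).filter (· < q) := by
        conv_lhs => rw [← hPdecomp]
        exact Multiset.filter_cons_of_neg _ (by have := hmax q hqP; omega)
      rwa [this] at h2
    set d' := Function.update d i (d i - p) with hd'_def
    have hd'sum : (∑ j, d' j) = (P.erase p).sum := by
      rw [hd'_def, Finset.sum_update_of_mem (Finset.mem_univ i)]
      have : (∑ j, d j) = d i + ∑ x ∈ Finset.univ \ {i}, d x := by
        rw [← Finset.sum_eq_add_sum_sdiff_singleton_of_mem (Finset.mem_univ i)]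
      omega
    obtain ⟨Q', hQ'sum, hQ'⟩ := ih (P.erase p) hcard' hcond' d' hd'sum
    refine ⟨Function.update Q' i (p ::ₘ Q' i), ?_, ?_⟩
    · rw [Finset.sum_update_of_mem (Finset.mem_univ i)]
      have h1 : (∑ j, Q' j) = Q' i + ∑ x ∈ Finset.univ \ {i}, Q' x :=
        Finset.sum_eq_add_sum_sdiff_singleton_of_mem (Finset.mem_univ i) _
      rw [Multiset.cons_add, ← h1, hQ'sum]
      exact hPdecomp
    · intro j
      by_cases hji : j = i
      · subst hji
        rw [Function.update_self, Multiset.sum_cons, hQ' j, hd'_def, Function.update_self]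
        omega
      · rw [Function.update_of_ne hji, hQ' j, hd'_def, Function.update_of_ne hji]

private lemma geom (j : ℕ) : ((Multiset.range j).map (2 ^ ·)).sum = 2 ^ j - 1 := by
  induction j with
  | zero => simp
  | succ j ih =>
    rw [Multiset.range_succ, Multiset.map_cons, Multiset.sum_cons, ih]
    have : 0 < 2 ^ j := pow_pos (by norm_num) j
    rw [pow_succ]
    omega

private lemma range_filter_lt (h j : ℕ) (hjh : j ≤ h) :
    (Multiset.range h).filter (· < j) = Multiset.range j := by
  induction h with
  | zero => have : j = 0 := by omega
            subst this; simp
  | succ h ih =>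
    rcases Nat.lt_or_ge h j with hc | hc
    · have : j = h + 1 := by omega
      subst this
      exact Multiset.filter_eq_self.mpr (fun a ha => Multiset.mem_range.mp ha)
    · rw [Multiset.range_succ, Multiset.filter_cons_of_neg _ (by omega), ih (by omega)]

theorem stmt_5 : ∃ C : ℕ, 0 < C ∧ ∀ τ k : ℕ, 1 ≤ τ → 1 ≤ k →
    ∃ P : Multiset ℕ,
      (∀ x ∈ P, 0 < x) ∧
      Multiset.card P ≤ C * k ^ 2 * (Nat.log 2 τ + 1) ∧
      P.sum = τ ∧
      ∀ t : Fin k → ℕ, (∑ i, t i) = τ →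
        ∃ Q : Fin k → Multiset ℕ, (∑ i, Q i) = P ∧ ∀ i, (Q i).sum = t i := by
  refine ⟨5, by norm_num, ?_⟩
  intro τ k hτ hk
  set h := Nat.log 2 (τ / k) with hh_def
  set a := τ - k * (2 ^ h - 1) with ha_def
  set m := a / 2 ^ h with hm_def
  set b := a % 2 ^ h with hb_def
  have h2pos : 0 < 2 ^ h := pow_pos (by norm_num) h
  -- k * (2^h - 1) ≤ τ, in fact k * 2^h ≤ τ + k
  have hklow : k * (2 ^ h - 1) ≤ τ ∧ k * 2 ^ h ≤ τ + k := by
    rcases Nat.lt_or_ge τ k with hc | hc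
    · have : τ / k = 0 := Nat.div_eq_of_lt hc
      rw [hh_def, this, Nat.log_zero_right]
      simp only [pow_zero]
      omega
    · have hdiv : τ / k ≠ 0 := by
        have := Nat.one_le_div_iff (by omega : 0 < k) |>.mpr hc
        omega
      have h1 : 2 ^ h ≤ τ / k := Nat.pow_log_le_self 2 hdiv
      have h2 : k * (τ / k) ≤ τ := by
        rw [Nat.mul_comm]; exact Nat.div_mul_le_self τ k
      have h3 : k * 2 ^ h ≤ k * (τ/k) := Nat.mul_le_mul_left k h1
      constructor
      · calc k * (2^h - 1) ≤ k * 2^h := Nat.mul_le_mul_left k (by omega)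
          _ ≤ k * (τ/k) := h3
          _ ≤ τ := h2
      · omega
  set B : Multiset ℕ := (Multiset.range h).map (2 ^ ·) with hB_def
  set P : Multiset ℕ := k • B + (Multiset.replicate m (2 ^ h) + bin b) with hP_def
  -- every element of P is a power 2^j with j ≤ h
  have hmem : ∀ p ∈ P, ∃ j, p = 2 ^ j ∧ j ≤ h := by
    intro p hp
    rw [hP_def] at hp
    rcases Multiset.mem_add.mp hp with h1 | h1
    · obtain ⟨-, h1⟩ := Multiset.mem_nsmul.mp h1
      obtain ⟨i, hi, rfl⟩ := Multiset.mem_map.mp h1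
      exact ⟨i, rfl, le_of_lt (Multiset.mem_range.mp hi)⟩
    · rcases Multiset.mem_add.mp h1 with h2 | h2
      · exact ⟨h, Multiset.eq_of_mem_replicate h2, le_refl h⟩
      · obtain ⟨j, rfl, hle⟩ := bin_mem b p h2
        have hb_lt : b < 2 ^ h := Nat.mod_lt a h2pos
        have : 2 ^ j < 2 ^ h := lt_of_le_of_lt hle hb_lt
        exact ⟨j, rfl, le_of_lt ((Nat.pow_lt_pow_iff_right (by norm_num)).mp this)⟩
  have hpos : ∀ x ∈ P, 0 < x := by
    intro x hx
    obtain ⟨j, rfl, -⟩ := hmem x hx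
    exact pow_pos (by norm_num) j
  -- key filter bound
  have hkey : ∀ j ≤ h, k * (2 ^ j - 1) ≤ (P.filter (· < 2 ^ j)).sum := by
    intro j hjh
    have hBfil : B.filter (· < 2 ^ j) = (Multiset.range j).map (2 ^ ·) := by
      rw [hB_def, Multiset.filter_map]
      congr 1
      have : (Multiset.range h).filter ((· < 2 ^ j) ∘ (2 ^ ·)) =
          (Multiset.range h).filter (· < j) := by
        apply Multiset.filter_congr
        intro i _
        simp only [Function.comp]
        constructor
        · intro hlt; exact (Nat.pow_lt_pow_iff_right (by norm_num)).mp hlt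
        · intro hlt; exact (Nat.pow_lt_pow_iff_right (by norm_num)).mpr hlt
      rw [this, range_filter_lt h j hjh]
    have h1 : ((k • B).filter (· < 2 ^ j)).sum = k * (2 ^ j - 1) := by
      rw [Multiset.filter_nsmul, Multiset.sum_nsmul, hBfil, geom, smul_eq_mul]
    rw [hP_def, Multiset.filter_add, Multiset.sum_add, h1]
    omega
  have hcond : ∀ p ∈ P, 0 < p ∧ k * (p - 1) ≤ (P.filter (· < p)).sum := by
    intro p hp
    obtain ⟨j, rfl, hjh⟩ := hmem p hp
    exact ⟨pow_pos (by norm_num) j, hkey j hjh⟩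
  -- sum
  have hBsum : B.sum = 2 ^ h - 1 := geom h
  have hPsum : P.sum = τ := by
    rw [hP_def, Multiset.sum_add, Multiset.sum_add, Multiset.sum_nsmul, hBsum,
      Multiset.sum_replicate, bin_sum, smul_eq_mul, smul_eq_mul]
    have hdm : m * 2 ^ h + b = a := by
      rw [hm_def, hb_def, Nat.mul_comm]; exact Nat.div_add_mod a (2^h)
    omega
  -- card
  have hcard : Multiset.card P ≤ 5 * k ^ 2 * (Nat.log 2 τ + 1) := by
    have hc1 : Multiset.card P = k * h + m + Multiset.card (bin b) := by
      rw [hP_def, Multiset.card_add, Multiset.card_add, Multiset.card_nsmul,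
        Multiset.card_replicate, hB_def, Multiset.card_map, Multiset.card_range]
      omega
    have hbin : Multiset.card (bin b) ≤ h := bin_card h b (Nat.mod_lt a h2pos)
    have hm2k : m ≤ 2 * k := by
      -- τ < 2k * 2^h
      have hτk : τ / k < 2 ^ (h+1) := Nat.lt_pow_succ_log_self (by norm_num) (τ / k)
      have hτub : τ < k * 2 ^ (h+1) := by
        have := Nat.div_add_mod τ k
        have hmod : τ % k < k := Nat.mod_lt τ (by omega)
        nlinarith [Nat.mul_le_mul_left k (Nat.succ_le_of_lt hτk)]
      have : a < 2 * k * 2 ^ h := by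
        rw [pow_succ] at hτub
        have : a ≤ τ := by rw [ha_def]; omega
        nlinarith
      rw [hm_def]
      exact Nat.le_of_lt_succ (by
        have := Nat.div_lt_iff_lt_mul h2pos |>.mpr (by nlinarith : a < (2 * k + 1) * 2 ^ h)
        omega)
    have hhL : h ≤ Nat.log 2 τ := by
      rw [hh_def]
      exact Nat.log_mono_right (Nat.div_le_self τ k)
    have hk2 : k ≤ k ^ 2 := by nlinarith
    set L := Nat.log 2 τ with hL_def
    calc Multiset.card P = k * h + m + Multiset.card (bin b) := hc1
      _ ≤ k * L + 2 * k + L := by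
          have : k * h ≤ k * L := Nat.mul_le_mul_left k hhL
          omega
      _ ≤ 5 * k ^ 2 * (L + 1) := by nlinarith
  refine ⟨P, hpos, hcard, hPsum, ?_⟩
  intro t ht
  exact greedy k hk (Multiset.card P) P rfl hcond t (by rw [hPsum, ht])
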